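/- Let R = [A, B ; B^†, C] be an m×m Hermitian complex matrix, partitioned with A of size n×n (1 ≤ n < m), and suppose every eigenvalue of R lies in the interval [f_min, f_max] with 0 < f_min ≤ f_max. Then A is positive definite (hence invertible), the spectral norm satisfies ‖A^{−1} B‖₂ ≤ (f_max/f_min)^{1/2}, and for all u_1 ∈ ℂ^n, u_2 ∈ ℂ^{m−n}, ‖u_1 + A^{−1} B u_2‖₂ ≤ ‖u_1‖₂ + (f_max/f_min)^{1/2} ‖u_2‖₂. -/

import Mathlib

open Matrix
open scoped ComplexOrder

noncomputable section

/-- Euclidean (`ℓ²`) norm of a complex vector. -/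
def l2norm {ι : Type*} [Fintype ι] (v : ι → ℂ) : ℝ := Real.sqrt (∑ i, ‖v i‖ ^ 2)

/-- Spectral norm (largest singular value) of a complex matrix: the supremum of
`‖M v‖₂` over the `ℓ²` unit ball. -/
def specNorm {ι κ : Type*} [Fintype ι] [Fintype κ] (M : Matrix ι κ ℂ) : ℝ :=
  sSup {c : ℝ | ∃ v : κ → ℂ, l2norm v ≤ 1 ∧ c = l2norm (M *ᵥ v)}

private lemma shift_psd_lower {m : Type*} [Fintype m] [DecidableEq m] {M : Matrix m m ℂ}
    (hM : M.IsHermitian) {a : ℝ} (h : ∀ i, a ≤ hM.eigenvalues i) :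
    (M - (a:ℂ) • 1).PosSemidef := by
  have key : M - (a:ℂ) • 1 =
      (hM.eigenvectorUnitary : Matrix m m ℂ) *
        diagonal (fun i => ((hM.eigenvalues i - a : ℝ) : ℂ)) *
        star (hM.eigenvectorUnitary : Matrix m m ℂ) := by
    conv_lhs => rw [hM.spectral_theorem, Unitary.conjStarAlgAut_apply]
    have h1 : ((a:ℂ) • (1 : Matrix m m ℂ)) =
        (hM.eigenvectorUnitary : Matrix m m ℂ) * ((a:ℂ) • 1) *
          star (hM.eigenvectorUnitary : Matrix m m ℂ) := by
      rw [Matrix.mul_smul, mul_one, Matrix.smul_mul,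
        (Matrix.mem_unitaryGroup_iff).mp (hM.eigenvectorUnitary).2]
    rw [h1, ← Matrix.sub_mul, ← Matrix.mul_sub]
    congr 1
    rw [← Matrix.diagonal_one, ← Matrix.diagonal_smul, Matrix.diagonal_sub]
    congr 1
    ext i
    push_cast
    simp
  rw [key]
  exact (Matrix.posSemidef_diagonal_iff.mpr (fun i => by
    simpa [Complex.zero_le_real] using sub_nonneg.mpr (h i))).mul_mul_conjTranspose_same _

private lemma shift_psd_upper {m : Type*} [Fintype m] [DecidableEq m] {M : Matrix m m ℂ}
    (hM : M.IsHermitian) {b : ℝ} (h : ∀ i, hM.eigenvalues i ≤ b) :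
    ((b:ℂ) • 1 - M).PosSemidef := by
  have key : (b:ℂ) • 1 - M =
      (hM.eigenvectorUnitary : Matrix m m ℂ) *
        diagonal (fun i => ((b - hM.eigenvalues i : ℝ) : ℂ)) *
        star (hM.eigenvectorUnitary : Matrix m m ℂ) := by
    conv_lhs => rw [hM.spectral_theorem, Unitary.conjStarAlgAut_apply]
    have h1 : ((b:ℂ) • (1 : Matrix m m ℂ)) =
        (hM.eigenvectorUnitary : Matrix m m ℂ) * ((b:ℂ) • 1) *
          star (hM.eigenvectorUnitary : Matrix m m ℂ) := by
      rw [Matrix.mul_smul, mul_one, Matrix.smul_mul,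
        (Matrix.mem_unitaryGroup_iff).mp (hM.eigenvectorUnitary).2]
    rw [h1, ← Matrix.sub_mul, ← Matrix.mul_sub]
    congr 1
    rw [← Matrix.diagonal_one, ← Matrix.diagonal_smul, Matrix.diagonal_sub]
    congr 1
    ext i
    push_cast
    simp
  rw [key]
  exact (Matrix.posSemidef_diagonal_iff.mpr (fun i => by
    simpa [Complex.zero_le_real] using sub_nonneg.mpr (h i))).mul_mul_conjTranspose_same _

private lemma star_dot_self_eq {ι : Type*} [Fintype ι] (v : ι → ℂ) :
    star v ⬝ᵥ v = ((∑ i, ‖v i‖ ^ 2 : ℝ) : ℂ) := by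
  rw [dotProduct]
  push_cast
  refine Finset.sum_congr rfl fun i _ => ?_
  rw [Pi.star_apply, Complex.star_def, ← Complex.normSq_eq_conj_mul_self,
    Complex.normSq_eq_norm_sq]
  norm_cast

private lemma l2norm_add_le {ι : Type*} [Fintype ι] (u v : ι → ℂ) :
    l2norm (u + v) ≤ l2norm u + l2norm v := by
  have h : ∀ w : ι → ℂ, l2norm w = ‖(WithLp.equiv 2 (ι → ℂ)).symm w‖ := by
    intro w; rw [EuclideanSpace.norm_eq]; rfl
  rw [h, h, h]
  exact norm_add_le ((WithLp.equiv 2 (ι → ℂ)).symm u) ((WithLp.equiv 2 (ι → ℂ)).symm v)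

/-- if `R = [A, B; B†, C]` is Hermitian with all eigenvalues in
`[f_min, f_max]`, `0 < f_min ≤ f_max`, then `A` is positive definite,
`‖A⁻¹B‖₂ ≤ (f_max/f_min)^{1/2}`, and
`‖u₁ + A⁻¹B u₂‖₂ ≤ ‖u₁‖₂ + (f_max/f_min)^{1/2} ‖u₂‖₂`. -/
theorem stmt_9 (n q : ℕ) (hn : 1 ≤ n) (hq : 1 ≤ q)
    (A : Matrix (Fin n) (Fin n) ℂ) (B : Matrix (Fin n) (Fin q) ℂ)
    (C : Matrix (Fin q) (Fin q) ℂ)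
    (fmin fmax : ℝ) (hfmin : 0 < fmin) (hf : fmin ≤ fmax)
    (hR : (Matrix.fromBlocks A B Bᴴ C).IsHermitian)
    (heig : ∀ i, hR.eigenvalues i ∈ Set.Icc fmin fmax) :
    A.PosDef ∧ specNorm (A⁻¹ * B) ≤ Real.sqrt (fmax / fmin) ∧
      ∀ (u₁ : Fin n → ℂ) (u₂ : Fin q → ℂ),
        l2norm (u₁ + (A⁻¹ * B) *ᵥ u₂)
          ≤ l2norm u₁ + Real.sqrt (fmax / fmin) * l2norm u₂ := by
  have L1 : ∀ z : (Fin n ⊕ Fin q) → ℂ,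
      (fmin:ℂ) * (star z ⬝ᵥ z) ≤ star z ⬝ᵥ (Matrix.fromBlocks A B Bᴴ C) *ᵥ z := by
    intro z
    have h := (shift_psd_lower hR (fun i => (heig i).1)).dotProduct_mulVec_nonneg z
    have e : star z ⬝ᵥ ((Matrix.fromBlocks A B Bᴴ C - (fmin:ℂ) • 1) *ᵥ z) =
        star z ⬝ᵥ (Matrix.fromBlocks A B Bᴴ C) *ᵥ z - (fmin:ℂ) * (star z ⬝ᵥ z) := by
      rw [Matrix.sub_mulVec, dotProduct_sub, Matrix.smul_mulVec,
        Matrix.one_mulVec, dotProduct_smul, smul_eq_mul]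
    rw [e, sub_nonneg] at h
    exact h
  have L2 : ∀ z : (Fin n ⊕ Fin q) → ℂ,
      star z ⬝ᵥ (Matrix.fromBlocks A B Bᴴ C) *ᵥ z ≤ (fmax:ℂ) * (star z ⬝ᵥ z) := by
    intro z
    have h := (shift_psd_upper hR (fun i => (heig i).2)).dotProduct_mulVec_nonneg z
    have e : star z ⬝ᵥ (((fmax:ℂ) • 1 - Matrix.fromBlocks A B Bᴴ C) *ᵥ z) =
        (fmax:ℂ) * (star z ⬝ᵥ z) - star z ⬝ᵥ (Matrix.fromBlocks A B Bᴴ C) *ᵥ z := by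
      rw [Matrix.sub_mulVec, dotProduct_sub, Matrix.smul_mulVec,
        Matrix.one_mulVec, dotProduct_smul, smul_eq_mul]
    rw [e, sub_nonneg] at h
    exact h
  have hstarelim : ∀ (x : Fin n → ℂ) (y : Fin q → ℂ),
      star (Sum.elim x y) = Sum.elim (star x) (star y) := by
    intro x y; funext i; cases i <;> simp
  have hblockQ : ∀ (x : Fin n → ℂ) (y : Fin q → ℂ),
      star (Sum.elim x y) ⬝ᵥ (Matrix.fromBlocks A B Bᴴ C) *ᵥ (Sum.elim x y) =
        star x ⬝ᵥ (A *ᵥ x) + star x ⬝ᵥ (B *ᵥ y) +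
          (star y ⬝ᵥ (Bᴴ *ᵥ x) + star y ⬝ᵥ (C *ᵥ y)) := by
    intro x y
    rw [Matrix.fromBlocks_mulVec, hstarelim]
    simp [dotProduct_add]
  have hselim : ∀ (x : Fin n → ℂ) (y : Fin q → ℂ),
      star (Sum.elim x y) ⬝ᵥ (Sum.elim x y) = star x ⬝ᵥ x + star y ⬝ᵥ y := by
    intro x y; rw [hstarelim]; simp
  have hAherm : A.IsHermitian := by
    have h := congrArg Matrix.toBlocks₁₁ hR
    have h' : Aᴴ = A := by
      simpa [Matrix.fromBlocks_conjTranspose, Matrix.toBlocks_fromBlocks₁₁] using h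
    exact h'
  have hApd : A.PosDef := by
    refine Matrix.PosDef.of_dotProduct_mulVec_pos hAherm (fun x hx => ?_)
    have h1 := L1 (Sum.elim x 0)
    have e1 : star (Sum.elim x (0 : Fin q → ℂ)) ⬝ᵥ
        (Matrix.fromBlocks A B Bᴴ C) *ᵥ (Sum.elim x 0) = star x ⬝ᵥ (A *ᵥ x) := by
      rw [hblockQ]; simp
    rw [e1, hselim] at h1
    simp only [dotProduct_zero] at h1
    have hx' : (0:ℂ) < star x ⬝ᵥ x := Matrix.dotProduct_star_self_pos_iff.mpr hx
    calc (0:ℂ) < (fmin:ℂ) * (star x ⬝ᵥ x) :=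
          mul_pos (by exact_mod_cast hfmin) hx'
      _ ≤ _ := by simpa using h1
  have hdet : IsUnit A.det := (Matrix.isUnit_iff_isUnit_det A).mp hApd.isUnit
  have hABmul : ∀ y : Fin q → ℂ, A *ᵥ ((A⁻¹ * B) *ᵥ y) = B *ᵥ y := by
    intro y
    rw [Matrix.mulVec_mulVec, ← Matrix.mul_assoc, Matrix.mul_nonsing_inv _ hdet,
      Matrix.one_mul]
  have hkey : ∀ y : Fin q → ℂ,
      l2norm ((A⁻¹ * B) *ᵥ y) ≤ Real.sqrt (fmax / fmin) * l2norm y := by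
    intro y
    set x : Fin n → ℂ := (A⁻¹ * B) *ᵥ y with hxdef
    -- the quadratic form of R at (−x, y)
    have h1 := L1 (Sum.elim (-x) y)
    rw [hselim] at h1
    have tA_nonneg : (0:ℂ) ≤ star x ⬝ᵥ (A *ᵥ x) := hApd.posSemidef.dotProduct_mulVec_nonneg x
    have htA : star y ⬝ᵥ (Bᴴ *ᵥ x) = star x ⬝ᵥ (A *ᵥ x) := by
      rw [Matrix.dotProduct_mulVec, ← Matrix.star_mulVec, ← hABmul y, Matrix.star_dotProduct]
      have him : (star x ⬝ᵥ (A *ᵥ x)).im = 0 := by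
        have := tA_nonneg
        rw [Complex.le_def] at this
        simpa using this.2.symm
      rw [← hxdef, Complex.star_def]
      exact Complex.conj_eq_iff_im.mpr him
    have e1 : star (Sum.elim (-x) y) ⬝ᵥ
        (Matrix.fromBlocks A B Bᴴ C) *ᵥ (Sum.elim (-x) y) =
          -(star x ⬝ᵥ (A *ᵥ x)) + star y ⬝ᵥ (C *ᵥ y) := by
      rw [hblockQ]
      have hAx : A *ᵥ (-x) = -(B *ᵥ y) := by rw [Matrix.mulVec_neg, hABmul]
      rw [hAx, Matrix.mulVec_neg]
      simp [htA]
    rw [e1] at h1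
    have hC : star y ⬝ᵥ (C *ᵥ y) ≤ (fmax:ℂ) * (star y ⬝ᵥ y) := by
      have h2 := L2 (Sum.elim 0 y)
      have e2 : star (Sum.elim (0 : Fin n → ℂ) y) ⬝ᵥ
          (Matrix.fromBlocks A B Bᴴ C) *ᵥ (Sum.elim 0 y) = star y ⬝ᵥ (C *ᵥ y) := by
        rw [hblockQ]; simp
      rw [e2, hselim] at h2
      simpa using h2
    have hxx : star (-x) ⬝ᵥ (-x) = star x ⬝ᵥ x := by simp
    rw [hxx] at h1
    -- assemble the complex inequality fmin * ⟨x,x⟩ ≤ fmax * ⟨y,y⟩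
    have hcineq : (fmin:ℂ) * (star x ⬝ᵥ x) ≤ (fmax:ℂ) * (star y ⬝ᵥ y) := by
      have hy_nonneg : (0:ℂ) ≤ (fmin:ℂ) * (star y ⬝ᵥ y) :=
        mul_nonneg (by exact_mod_cast hfmin.le) (dotProduct_star_self_nonneg y)
      calc (fmin:ℂ) * (star x ⬝ᵥ x)
          ≤ (fmin:ℂ) * (star x ⬝ᵥ x) + (fmin:ℂ) * (star y ⬝ᵥ y) := le_add_of_nonneg_right hy_nonneg
        _ = (fmin:ℂ) * (star x ⬝ᵥ x + star y ⬝ᵥ y) := by ring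
        _ ≤ -(star x ⬝ᵥ (A *ᵥ x)) + star y ⬝ᵥ (C *ᵥ y) := h1
        _ ≤ star y ⬝ᵥ (C *ᵥ y) := by
            have := neg_nonpos.mpr tA_nonneg
            calc -(star x ⬝ᵥ (A *ᵥ x)) + star y ⬝ᵥ (C *ᵥ y)
                ≤ 0 + star y ⬝ᵥ (C *ᵥ y) := add_le_add_left this _
              _ = _ := zero_add _
        _ ≤ (fmax:ℂ) * (star y ⬝ᵥ y) := hC
    -- move to the reals
    have hrineq : fmin * (∑ i, ‖x i‖ ^ 2) ≤ fmax * (∑ i, ‖y i‖ ^ 2) := by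
      rw [star_dot_self_eq, star_dot_self_eq] at hcineq
      exact_mod_cast hcineq
    have hsum : (∑ i, ‖x i‖ ^ 2) ≤ (fmax / fmin) * (∑ i, ‖y i‖ ^ 2) := by
      rw [div_mul_eq_mul_div, le_div_iff₀ hfmin]
      linarith
    have := Real.sqrt_le_sqrt hsum
    rw [Real.sqrt_mul (div_nonneg (hfmin.le.trans hf) hfmin.le)] at this
    exact this
  refine ⟨hApd, ?_, ?_⟩
  · refine Real.sSup_le ?_ (Real.sqrt_nonneg _)
    rintro c ⟨v, hv1, rfl⟩
    calc l2norm ((A⁻¹ * B) *ᵥ v) ≤ Real.sqrt (fmax / fmin) * l2norm v := hkey v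
      _ ≤ Real.sqrt (fmax / fmin) * 1 := by
          exact mul_le_mul_of_nonneg_left hv1 (Real.sqrt_nonneg _)
      _ = Real.sqrt (fmax / fmin) := mul_one _
  · intro u₁ u₂
    calc l2norm (u₁ + (A⁻¹ * B) *ᵥ u₂) ≤ l2norm u₁ + l2norm ((A⁻¹ * B) *ᵥ u₂) :=
          l2norm_add_le _ _
      _ ≤ l2norm u₁ + Real.sqrt (fmax / fmin) * l2norm u₂ :=
          add_le_add_right (hkey u₂) _

end
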